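/- The function ρ₁(z) = ((θ₁(0)-θ₁(u₀))e^{(θ₁(u₀)+θ₂(0))z} - (θ₁(0)+θ₂(u₀))e^{(θ₂(0)-θ₂(u₀))z}) / (e^{θ₁(u₀)z} - e^{-θ₂(u₀)z}) is strictly increasing on (0,∞). -/

import Mathlib

open Real Set

noncomputable def th1 (μ σ r u : ℝ) : ℝ := (Real.sqrt ((μ - u)^2 + 2*r*σ^2) + (μ - u)) / σ^2
noncomputable def th2 (μ σ r u : ℝ) : ℝ := (Real.sqrt ((μ - u)^2 + 2*r*σ^2) - (μ - u)) / σ^2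

noncomputable def rho1 (μ σ r u₀ z : ℝ) : ℝ :=
  ((th1 μ σ r 0 - th1 μ σ r u₀) * Real.exp ((th1 μ σ r u₀ + th2 μ σ r 0) * z)
    - (th1 μ σ r 0 + th2 μ σ r u₀) * Real.exp ((th2 μ σ r 0 - th2 μ σ r u₀) * z)) /
  (Real.exp (th1 μ σ r u₀ * z) - Real.exp (-(th2 μ σ r u₀) * z))

noncomputable def rho2 (μ σ r u₀ z : ℝ) : ℝ :=
  ((th2 μ σ r 0 - th2 μ σ r u₀) * Real.exp (-(th1 μ σ r 0 + th2 μ σ r u₀) * z)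
    - (th2 μ σ r 0 + th1 μ σ r u₀) * Real.exp ((th1 μ σ r u₀ - th1 μ σ r 0) * z)) /
  (Real.exp (th1 μ σ r u₀ * z) - Real.exp (-(th2 μ σ r u₀) * z))

lemma sqrt_gt' {K m : ℝ} (hK : 0 < K) : m < Real.sqrt (m^2 + K) ∧ -m < Real.sqrt (m^2 + K) := by
  have h1 : Real.sqrt (m^2+K) ^ 2 = m^2 + K := Real.sq_sqrt (by positivity)
  have h3 : 0 ≤ Real.sqrt (m^2+K) := Real.sqrt_nonneg _
  constructor <;> nlinarith

lemma sqrt_aux' {K m₁ m₂ : ℝ} (hK : 0 < K) (h : m₁ < m₂) :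
    Real.sqrt (m₁^2 + K) + m₁ < Real.sqrt (m₂^2 + K) + m₂ ∧
    Real.sqrt (m₂^2 + K) - m₂ < Real.sqrt (m₁^2 + K) - m₁ := by
  have h1 : Real.sqrt (m₁^2+K) ^ 2 = m₁^2 + K := Real.sq_sqrt (by positivity)
  have h2 : Real.sqrt (m₂^2+K) ^ 2 = m₂^2 + K := Real.sq_sqrt (by positivity)
  obtain ⟨p1, q1⟩ := sqrt_gt' (m := m₁) hK
  obtain ⟨p2, q2⟩ := sqrt_gt' (m := m₂) hK
  constructor
  · nlinarith [mul_pos (sub_pos.2 h) (show (0:ℝ) < Real.sqrt (m₁^2+K) + m₁ + (Real.sqrt (m₂^2+K) + m₂) by linarith)]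
  · nlinarith [mul_pos (sub_pos.2 h) (show (0:ℝ) < Real.sqrt (m₁^2+K) - m₁ + (Real.sqrt (m₂^2+K) - m₂) by linarith)]

theorem stmt13 (μ σ r u₀ : ℝ) (hσ : 0 < σ) (hr : 0 < r) (hu₀ : 0 < u₀) :
    StrictMonoOn (rho1 μ σ r u₀) (Set.Ioi 0) := by
  have hK : 0 < 2*r*σ^2 := by positivity
  have hσ2 : (0:ℝ) < σ^2 := by positivity
  have hm : μ - u₀ < μ - 0 := by linarith
  obtain ⟨h1lt, h2lt⟩ := sqrt_aux' hK hm
  set a := th1 μ σ r 0 with ha_def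
  set b := th2 μ σ r 0 with hb_def
  set c := th1 μ σ r u₀ with hc_def
  set d := th2 μ σ r u₀ with hd_def
  have hca : c < a := by
    rw [ha_def, hc_def, th1, th1]
    exact div_lt_div_of_pos_right h1lt hσ2
  have hbd : b < d := by
    rw [hb_def, hd_def, th2, th2]
    exact div_lt_div_of_pos_right h2lt hσ2
  have hb : 0 < b := by
    rw [hb_def, th2]
    exact div_pos (by linarith [(sqrt_gt' (m := μ - 0) hK).1]) hσ2
  have hc : 0 < c := by
    rw [hc_def, th1]
    exact div_pos (by linarith [(sqrt_gt' (m := μ - u₀) hK).2]) hσ2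
  have hd : 0 < d := by
    rw [hd_def, th2]
    exact div_pos (by linarith [(sqrt_gt' (m := μ - u₀) hK).1]) hσ2
  -- denominators
  have hD2 : ∀ z : ℝ, 0 < z → 0 < Real.exp ((c+d-b)*z) - Real.exp (-(b*z)) := by
    intro z hz
    have : -(b*z) < (c+d-b)*z := by nlinarith
    exact sub_pos.2 (Real.exp_lt_exp.2 this)
  -- closed form
  have key : ∀ z : ℝ, 0 < z → rho1 μ σ r u₀ z
      = (a - c) * Real.exp (b*z) - (c+d) / (Real.exp ((c+d-b)*z) - Real.exp (-(b*z))) := by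
    intro z hz
    have hD1 : 0 < Real.exp (c*z) - Real.exp (-d*z) := by
      have : -d*z < c*z := by nlinarith
      exact sub_pos.2 (Real.exp_lt_exp.2 this)
    rw [rho1]
    rw [← ha_def, ← hb_def, ← hc_def, ← hd_def]
    have e1 : Real.exp ((c+b)*z) = Real.exp (c*z) * Real.exp (b*z) := by
      rw [← Real.exp_add]; congr 1; ring
    have e2 : Real.exp ((b-d)*z) = Real.exp (b*z) / Real.exp (d*z) := by
      rw [← Real.exp_sub]; congr 1; ring
    have e3 : Real.exp (-d*z) = (Real.exp (d*z))⁻¹ := by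
      rw [← Real.exp_neg]; congr 1; ring
    have e4 : Real.exp ((c+d-b)*z) = Real.exp (c*z) * Real.exp (d*z) / Real.exp (b*z) := by
      rw [← Real.exp_add, ← Real.exp_sub]; congr 1; ring
    have e5 : Real.exp (-(b*z)) = (Real.exp (b*z))⁻¹ := Real.exp_neg _
    rw [e1, e2, e3, e4, e5]
    have hx := Real.exp_ne_zero (b*z)
    have hy := Real.exp_ne_zero (c*z)
    have hw := Real.exp_ne_zero (d*z)
    have hden : Real.exp (c*z) - (Real.exp (d*z))⁻¹ ≠ 0 := by
      rw [← e3]; exact hD1.ne'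
    have hden2 : Real.exp (c*z) * Real.exp (d*z) / Real.exp (b*z) - (Real.exp (b*z))⁻¹ ≠ 0 := by
      rw [← e4, ← e5]; exact (hD2 z hz).ne'
    have hT : Real.exp (c*z) * Real.exp (d*z) - 1 ≠ 0 := by
      rw [← Real.exp_add]
      have h01 : (1:ℝ) < Real.exp (c*z + d*z) := by
        have : (0:ℝ) < c*z + d*z := by nlinarith
        simpa using Real.exp_lt_exp.2 this
      linarith
    have hT' : (-1 + Real.exp (c*z) * Real.exp (d*z)) ≠ 0 := by
      intro h; apply hT; linarith
    field_simp
    have hT'' : -1 + Real.exp (c * z) * Real.exp (z * d) ≠ 0 := by rw [mul_comm z d]; exact hT'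
    have key2 := mul_inv_cancel₀ hT''
    ring_nf
    linear_combination (a - c) * key2
  intro x hx y hy hxy
  rw [mem_Ioi] at hx hy
  rw [key x hx, key y hy]
  have h1 : (a - c) * Real.exp (b*x) < (a - c) * Real.exp (b*y) := by
    apply mul_lt_mul_of_pos_left (Real.exp_lt_exp.2 (by nlinarith)) (by linarith)
  have hDx := hD2 x hx
  have hDy := hD2 y hy
  have hmono : Real.exp ((c+d-b)*x) - Real.exp (-(b*x)) < Real.exp ((c+d-b)*y) - Real.exp (-(b*y)) := by
    have l1 : Real.exp ((c+d-b)*x) < Real.exp ((c+d-b)*y) := Real.exp_lt_exp.2 (by nlinarith)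
    have l2 : Real.exp (-(b*y)) < Real.exp (-(b*x)) := Real.exp_lt_exp.2 (by nlinarith)
    linarith
  have h2 : (c+d) / (Real.exp ((c+d-b)*y) - Real.exp (-(b*y)))
      < (c+d) / (Real.exp ((c+d-b)*x) - Real.exp (-(b*x))) :=
    div_lt_div_of_pos_left (by linarith) hDx hmono
  linarith
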